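/- Under the stated context, (α + β)² is a nonzero rational integer. -/

import Mathlib

open Polynomial IntermediateField

noncomputable def sqrtneg (c : ℕ) : ℂ := Complex.I * Real.sqrt c

lemma sqrtneg_sq (c : ℕ) : sqrtneg c ^ 2 = -(c : ℂ) := by
  have h : ((Real.sqrt c : ℝ) : ℂ) ^ 2 = (c : ℂ) := by
    rw [← Complex.ofReal_pow, Real.sq_sqrt (by positivity)]
    norm_num
  simp [sqrtneg, mul_pow, Complex.I_sq, h]

lemma sqrtneg_isIntegral (c : ℕ) : IsIntegral ℚ (sqrtneg c) := by
  refine ⟨X ^ 2 + C (c : ℚ), monic_X_pow_add_C _ two_ne_zero, ?_⟩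
  simp [eval₂_add, eval₂_pow, sqrtneg_sq c]

/-- The field `K = ℚ(√-c)`, realised as the subfield of `ℂ` generated by `i·√c`. -/
noncomputable def Kf (c : ℕ) : IntermediateField ℚ ℂ := ℚ⟮sqrtneg c⟯

/-- The class number of `ℚ(√-c)`. -/
noncomputable def classNumberK (c : ℕ) : ℕ :=
  haveI : FiniteDimensional ℚ (Kf c) :=
    IntermediateField.adjoin.finiteDimensional (sqrtneg_isIntegral c)
  haveI : NumberField (Kf c) := ⟨⟩
  NumberField.classNumber (Kf c)

lemma conj_sqrtneg (c : ℕ) : (starRingEnd ℂ) (sqrtneg c) = - sqrtneg c := by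
  simp [sqrtneg, Complex.conj_I]

lemma mem_Kf_repr {c : ℕ} {z : ℂ} (hz : z ∈ Kf c) :
    ∃ a b : ℚ, z = (a : ℂ) + (b : ℂ) * sqrtneg c := by
  have h : (Kf c).toSubalgebra = Algebra.adjoin ℚ {sqrtneg c} := by
    simpa [Kf] using
      IntermediateField.adjoin_simple_toSubalgebra_of_isAlgebraic (sqrtneg_isIntegral c).isAlgebraic
  have hz' : z ∈ Algebra.adjoin ℚ {sqrtneg c} := by
    rw [← h]; exact hz
  clear hz
  induction hz' using Algebra.adjoin_induction with
  | mem w hw =>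
    rcases hw with rfl
    exact ⟨0, 1, by simp⟩
  | algebraMap r => exact ⟨r, 0, by simp [Algebra.algebraMap_eq_smul_one, Rat.smul_one_eq_cast]⟩
  | add u v hu hv ihu ihv =>
    obtain ⟨a, b, rfl⟩ := ihu
    obtain ⟨a', b', rfl⟩ := ihv
    exact ⟨a + a', b + b', by push_cast; ring⟩
  | mul u v hu hv ihu ihv =>
    obtain ⟨a, b, rfl⟩ := ihu
    obtain ⟨a', b', rfl⟩ := ihv
    refine ⟨a * a' - c * b * b', a * b' + a' * b, ?_⟩
    have hs2 := sqrtneg_sq c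
    push_cast
    linear_combination ((b : ℂ) * (b' : ℂ)) * hs2

/-- The Lucas-type sequence `sₙ = δⁿ + δ̄ⁿ`. -/
def lucasS (t N : ℤ) : ℕ → ℤ
  | 0 => 2
  | 1 => t
  | (n+2) => t * lucasS t N (n+1) - N * lucasS t N n

lemma lucasS_complex (t N : ℤ) (u v : ℂ) (hsum : u + v = (t : ℂ))
    (hprod : u * v = (N : ℂ)) : ∀ n : ℕ, ((lucasS t N n : ℤ) : ℂ) = u ^ n + v ^ n := by
  intro n
  induction n using Nat.strong_induction_on with
  | _ n ih =>
    match n with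
    | 0 => norm_num [lucasS]
    | 1 => simp [lucasS, ← hsum]
    | (n+2) =>
      have h1 := ih (n+1) (by omega)
      have h2 := ih n (by omega)
      show ((t * lucasS t N (n+1) - N * lucasS t N n : ℤ) : ℂ) = _
      push_cast
      rw [h1, h2, ← hsum, ← hprod]
      ring

lemma lucasS_mod (t N : ℤ) (M : ℤ) (hM : M ∣ N) :
    ∀ n : ℕ, lucasS t N (n+1) ≡ t ^ (n+1) [ZMOD M] := by
  intro n
  induction n with
  | zero => simp [lucasS]
  | succ n ih =>
    show lucasS t N (n+2) ≡ _ [ZMOD M]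
    have h : lucasS t N (n+2) = t * lucasS t N (n+1) - N * lucasS t N n := rfl
    rw [h]
    calc t * lucasS t N (n+1) - N * lucasS t N n
        ≡ t * t ^ (n+1) - 0 * lucasS t N n [ZMOD M] := by
          exact (Int.ModEq.mul_left t ih).sub
            (Int.ModEq.mul_right _ (Int.modEq_zero_iff_dvd.2 hM))
      _ = t ^ (n+2) := by ring

theorem stmt6 (C₁ C₂ c d : ℕ) (hC₁pos : 0 < C₁) (hC₁sqf : Squarefree C₁)
    (hC₂pos : 0 < C₂) (hcop : Nat.gcd C₁ C₂ = 1) (hmod8 : C₁ * C₂ % 8 ≠ 7)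
    (hcpos : 0 < c) (hdpos : 0 < d) (hcsqf : Squarefree c)
    (hfact : C₁ * C₂ = c * d ^ 2)
    (p : ℕ) (hp : p.Prime) (hpodd : Odd p)
    (hpcl : ¬ p ∣ classNumberK c)
    (hp3 : p = 3 → ¬ ∃ m : ℤ, (C₁ : ℤ) * (C₂ : ℤ) = 3 * m ^ 2)
    (x y : ℕ) (hxpos : 0 < x) (hypos : 0 < y)
    (heq : C₁ * x ^ 2 + C₂ = y ^ p)
    (hgcd : Nat.gcd (Nat.gcd (C₁ * x ^ 2) C₂) (y ^ p) = 1)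
    (δ : ℂ) (hδK : δ ∈ Kf c) (hδint : IsIntegral ℤ δ)
    (hδeq : (C₁ : ℂ) ^ ((p - 1) / 2) * ((C₁ : ℂ) * (x : ℂ) + (d : ℂ) * sqrtneg c) = δ ^ p)
    (α β : ℂ) (hα : α = δ / (Real.sqrt C₁ : ℂ))
    (hβ : β = (starRingEnd ℂ) δ / (Real.sqrt C₁ : ℂ))
    :
    ∃ m : ℤ, m ≠ 0 ∧ (α + β) ^ 2 = (m : ℂ) := by
  obtain ⟨a, b, hab⟩ := mem_Kf_repr hδK
  have hconjδ : (starRingEnd ℂ) δ = (a : ℂ) - (b : ℂ) * sqrtneg c := by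
    rw [hab]
    simp [conj_sqrtneg, map_add, map_mul, sub_eq_add_neg]
  have hT : δ + (starRingEnd ℂ) δ = ((2 * a : ℚ) : ℂ) := by
    rw [hconjδ, hab]; push_cast; ring
  -- the trace is a rational integer
  have hconjint : IsIntegral ℤ ((starRingEnd ℂ) δ) :=
    hδint.map (starRingEnd ℂ).toIntAlgHom
  have hTint : IsIntegral ℤ (((2 * a : ℚ) : ℂ)) := hT ▸ hδint.add hconjint
  have hTintQ : IsIntegral ℤ (2 * a : ℚ) := by
    refine (isIntegral_algHom_iff ((algebraMap ℚ ℂ).toIntAlgHom)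
      (algebraMap ℚ ℂ).injective).1 ?_
    have : ((algebraMap ℚ ℂ).toIntAlgHom) (2 * a) = ((2 * a : ℚ) : ℂ) := by
      simp [RingHom.toIntAlgHom, eq_ratCast]
    rw [this]
    exact hTint
  obtain ⟨t, ht⟩ := IsIntegrallyClosed.isIntegral_iff.1 hTintQ
  have hTt : δ + (starRingEnd ℂ) δ = ((t : ℤ) : ℂ) := by
    rw [hT, ← ht]
    push_cast
    norm_num
  -- p arithmetic
  -- p arithmetic
  obtain ⟨k, hk⟩ := id hpodd
  set e := (p - 1) / 2 with hedef
  set N : ℤ := ((C₁ * y : ℕ) : ℤ) with hNdef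
  -- conjugate of δ^p
  have hconj_pow : (starRingEnd ℂ) (δ ^ p) =
      (C₁ : ℂ) ^ e * ((C₁ : ℂ) * (x : ℂ) - (d : ℂ) * sqrtneg c) := by
    rw [← hδeq]
    simp [conj_sqrtneg, sub_eq_add_neg]
  -- natural number norm identity
  have hnat : C₁ ^ (p - 1) * (C₁ ^ 2 * x ^ 2 + d ^ 2 * c) = (C₁ * y) ^ p := by
    have h1 : d ^ 2 * c = C₁ * C₂ := by rw [mul_comm]; exact hfact.symm
    have h2 : C₁ ^ 2 * x ^ 2 + C₁ * C₂ = C₁ * y ^ p := by rw [← heq]; ring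
    rw [h1, h2, mul_pow]
    have h3 : C₁ ^ (p - 1) * (C₁ * y ^ p) = C₁ ^ (p - 1 + 1) * y ^ p := by ring
    rw [h3]
    congr 2
    omega
  have hnatC : (C₁ : ℂ) ^ (p - 1) * ((C₁ : ℂ) ^ 2 * (x : ℂ) ^ 2 + (d : ℂ) ^ 2 * (c : ℂ))
      = ((C₁ : ℂ) * (y : ℂ)) ^ p := by exact_mod_cast congrArg (Nat.cast (R := ℂ)) hnat
  have he2 : (C₁ : ℂ) ^ e * (C₁ : ℂ) ^ e = (C₁ : ℂ) ^ (p - 1) := by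
    rw [← pow_add]; congr 1; omega
  have hprod : δ * (starRingEnd ℂ) δ = (N : ℂ) := by
    have hmc : δ ^ p * (starRingEnd ℂ) (δ ^ p) = (((C₁ * y : ℕ) : ℂ)) ^ p := by
      rw [hconj_pow, ← hδeq]
      have hs2 := sqrtneg_sq c
      push_cast
      rw [← hnatC, ← he2]
      linear_combination (-((C₁ : ℂ) ^ e * (C₁ : ℂ) ^ e * (d : ℂ) ^ 2)) * hs2
    have hnormSq : ((Complex.normSq δ : ℝ) : ℂ) ^ p = (((C₁ * y : ℕ) : ℂ)) ^ p := by
      rw [← Complex.mul_conj, mul_pow, ← map_pow]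
      exact hmc
    have hR : (Complex.normSq δ) ^ p = ((C₁ * y : ℕ) : ℝ) ^ p := by exact_mod_cast hnormSq
    have hEq : Complex.normSq δ = ((C₁ * y : ℕ) : ℝ) :=
      (pow_left_inj₀ (Complex.normSq_nonneg δ) (by positivity) hp.ne_zero).1 hR
    rw [Complex.mul_conj, hEq, hNdef]
    push_cast
    ring
  -- the Lucas sequence values
  have hvals := lucasS_complex t N δ ((starRingEnd ℂ) δ) hTt hprod p
  have hsumval : δ ^ p + ((starRingEnd ℂ) δ) ^ p = ((2 * C₁ ^ (e + 1) * x : ℕ) : ℂ) := by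
    rw [← map_pow, hconj_pow, ← hδeq]
    push_cast
    ring
  have hspZ : lucasS t N p = ((2 * C₁ ^ (e + 1) * x : ℕ) : ℤ) := by
    exact_mod_cast hvals.trans hsumval
  have hdvdN : (C₁ : ℤ) ∣ N := ⟨(y : ℤ), by rw [hNdef]; push_cast; ring⟩
  have hmod := lucasS_mod t N C₁ hdvdN (p - 1)
  rw [show p - 1 + 1 = p from by omega] at hmod
  have hdvd_sp : (C₁ : ℤ) ∣ lucasS t N p := by
    rw [hspZ]; exact ⟨2 * (C₁ : ℤ) ^ e * (x : ℤ), by push_cast; ring⟩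
  have hdvd_tp : (C₁ : ℤ) ∣ t ^ p := by
    have h2 := dvd_add (Int.ModEq.dvd hmod) hdvd_sp
    simpa using h2
  have hdvd_t : (C₁ : ℤ) ∣ t :=
    ((Int.squarefree_natCast.2 hC₁sqf).dvd_pow_iff_dvd hp.ne_zero).1 hdvd_tp
  obtain ⟨u, hu⟩ := hdvd_t
  have ht0 : t ≠ 0 := by
    intro h0
    have hδc : (starRingEnd ℂ) δ = -δ :=
      eq_neg_of_add_eq_zero_right (by rw [hTt, h0]; simp)
    have hzero : δ ^ p + ((starRingEnd ℂ) δ) ^ p = 0 := by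
      rw [hδc, hpodd.neg_pow]; ring
    rw [hsumval] at hzero
    have h4 : (2 * C₁ ^ (e + 1) * x : ℕ) = 0 := by exact_mod_cast hzero
    have h5 : 0 < 2 * C₁ ^ (e + 1) * x := by positivity
    omega
  have hu0 : u ≠ 0 := by
    rintro rfl
    simp only [mul_zero] at hu
    exact ht0 hu
  refine ⟨C₁ * u ^ 2, ?_, ?_⟩
  · exact mul_ne_zero (by exact_mod_cast hC₁pos.ne') (pow_ne_zero _ hu0)
  · have hsq : ((Real.sqrt C₁ : ℝ) : ℂ) ^ 2 = (C₁ : ℂ) := by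
      rw [← Complex.ofReal_pow, Real.sq_sqrt (by positivity)]; norm_num
    have hC₁ne : (C₁ : ℂ) ≠ 0 := by exact_mod_cast hC₁pos.ne'
    rw [hα, hβ, ← add_div, div_pow, hsq, hTt, hu]
    field_simp
    push_cast
    ring
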